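/- Let F(D_r p) = ⟨D_r p, C⟩ + 2‖C‖_∞ ‖c(D_r p) − c‖₁ be the penalized OT objective over row-stochastic matrices p. If p* minimizes F, then π̃ = Round(D_r p*, r, c) ∈ Π(r,c) satisfies F(π̃) ≤ F(D_r p*); hence there exist minimizers of the penalized problem that are feasible couplings. -/

import Mathlib

noncomputable def rowSum {n : ℕ} (π : Fin n → Fin n → ℝ) (i : Fin n) : ℝ := ∑ j, π i j
noncomputable def colSum {n : ℕ} (π : Fin n → Fin n → ℝ) (j : Fin n) : ℝ := ∑ i, π i j

/-- The Altschuler–Weed–Rigollet rounding procedure. -/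
noncomputable def roundPlan {n : ℕ} (π : Fin n → Fin n → ℝ) (r c : Fin n → ℝ) :
    Fin n → Fin n → ℝ :=
  let π' : Fin n → Fin n → ℝ := fun i j => min (r i / rowSum π i) 1 * π i j
  let π'' : Fin n → Fin n → ℝ := fun i j => π' i j * min (c j / colSum π' j) 1
  let δr : Fin n → ℝ := fun i => r i - rowSum π'' i
  let δc : Fin n → ℝ := fun j => c j - colSum π'' j
  fun i j => π'' i j + (∑ i', |δr i'|)⁻¹ * δr i * δc j

/-- Rounding a minimizer of the penalized OT objective yields a feasible coupling
that is also a minimizer. -/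
theorem stmt_9 (n : ℕ) (hn : 0 < n)
    (C : Fin n → Fin n → ℝ) (hC : ∀ i j, 0 ≤ C i j)
    (Cinf : ℝ) (hCinf : IsGreatest (Set.range fun p : Fin n × Fin n => |C p.1 p.2|) Cinf)
    (r c : Fin n → ℝ) (hr0 : ∀ i, 0 ≤ r i) (hr1 : ∑ i, r i = 1)
    (hc0 : ∀ j, 0 ≤ c j) (hc1 : ∑ j, c j = 1)
    (F : (Fin n → Fin n → ℝ) → ℝ)
    (hF : ∀ π, F π = (∑ i, ∑ j, π i j * C i j) + 2 * Cinf * ∑ j, |colSum π j - c j|)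
    (pstar : Fin n → Fin n → ℝ) (hp0 : ∀ i j, 0 ≤ pstar i j) (hp1 : ∀ i, ∑ j, pstar i j = 1)
    (hmin : ∀ p : Fin n → Fin n → ℝ, (∀ i j, 0 ≤ p i j) → (∀ i, ∑ j, p i j = 1) →
      F (fun i j => r i * pstar i j) ≤ F (fun i j => r i * p i j)) :
    (∀ i j, 0 ≤ roundPlan (fun i j => r i * pstar i j) r c i j) ∧
    (∀ i, rowSum (roundPlan (fun i j => r i * pstar i j) r c) i = r i) ∧
    (∀ j, colSum (roundPlan (fun i j => r i * pstar i j) r c) j = c j) ∧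
    F (roundPlan (fun i j => r i * pstar i j) r c) ≤ F (fun i j => r i * pstar i j) := by
  -- basic facts about Cinf
  have hCinf0 : 0 ≤ Cinf := le_trans (abs_nonneg _) (hCinf.2 ⟨(⟨0, hn⟩, ⟨0, hn⟩), rfl⟩)
  have hCle : ∀ i j, C i j ≤ Cinf := fun i j =>
    le_trans (le_abs_self _) (hCinf.2 ⟨(i, j), rfl⟩)
  set π : Fin n → Fin n → ℝ := fun i j => r i * pstar i j with hπdef
  have hπ0 : ∀ i j, 0 ≤ π i j := fun i j => mul_nonneg (hr0 i) (hp0 i j)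
  have hrowπ : ∀ i, rowSum π i = r i := by
    intro i; simp only [rowSum, hπdef, ← Finset.mul_sum, hp1 i, mul_one]
  have hs0 : ∀ j, 0 ≤ colSum π j := fun j => Finset.sum_nonneg fun i _ => hπ0 i j
  have h'' : ∀ i j, min (r i / rowSum π i) 1 * π i j = π i j := by
    intro i j
    rw [hrowπ]
    rcases eq_or_ne (r i) 0 with h | h
    · show min (r i / r i) 1 * (r i * pstar i j) = r i * pstar i j
      simp [h]
    · rw [div_self h]; simp
  -- abbreviations
  set α : Fin n → ℝ := fun j => min (c j / colSum π j) 1 with hαdef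
  set π2 : Fin n → Fin n → ℝ := fun a b => π a b * α b with hπ2def
  set dr : Fin n → ℝ := fun i => r i - rowSum π2 i with hdrdef
  set dc : Fin n → ℝ := fun j => c j - colSum π2 j with hdcdef
  set Δ : ℝ := ∑ i, |dr i| with hΔdef
  have hplan : roundPlan π r c = fun i j => π2 i j + Δ⁻¹ * dr i * dc j := by
    funext i j
    simp only [roundPlan, h'']
    rfl
  -- facts about α, π2
  have hα0 : ∀ j, 0 ≤ α j := fun j => le_min (div_nonneg (hc0 j) (hs0 j)) one_pos.le
  have hα1 : ∀ j, α j ≤ 1 := fun j => min_le_right _ _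
  have hπ20 : ∀ i j, 0 ≤ π2 i j := fun i j => mul_nonneg (hπ0 i j) (hα0 j)
  have hπ2le : ∀ i j, π2 i j ≤ π i j := fun i j =>
    mul_le_of_le_one_right (hπ0 i j) (hα1 j)
  have hcol2 : ∀ j, colSum π2 j = min (c j) (colSum π j) := by
    intro j
    have h1 : colSum π2 j = colSum π j * α j := by
      simp only [colSum, hπ2def, ← Finset.sum_mul]
    rw [h1]
    rcases eq_or_lt_of_le (hs0 j) with h | h
    · rw [← h, zero_mul, min_eq_right (hc0 j)]
    · rw [hαdef, mul_min_of_nonneg _ _ h.le, mul_div_cancel₀ _ h.ne', mul_one]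
  have hdc0 : ∀ j, 0 ≤ dc j := by
    intro j; rw [hdcdef]
    simp only [hcol2, sub_nonneg]
    exact min_le_left _ _
  have hrow2le : ∀ i, rowSum π2 i ≤ r i := by
    intro i; rw [← hrowπ i]
    exact Finset.sum_le_sum fun j _ => hπ2le i j
  have hdr0 : ∀ i, 0 ≤ dr i := fun i => sub_nonneg.2 (hrow2le i)
  have hΔr : Δ = ∑ i, dr i := by
    rw [hΔdef]; exact Finset.sum_congr rfl fun i _ => abs_of_nonneg (hdr0 i)
  have hswap : ∑ i, rowSum π2 i = ∑ j, colSum π2 j := by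
    simp only [rowSum, colSum]; exact Finset.sum_comm
  have hΔc : Δ = ∑ j, dc j := by
    rw [hΔr, hdrdef, hdcdef]
    simp only [Finset.sum_sub_distrib, hr1, hc1, hswap]
  have hΔ0 : 0 ≤ Δ := by rw [hΔr]; exact Finset.sum_nonneg fun i _ => hdr0 i
  -- the three structural properties
  have hρ0 : ∀ i j, 0 ≤ roundPlan π r c i j := by
    intro i j; rw [hplan]
    exact add_nonneg (hπ20 i j)
      (mul_nonneg (mul_nonneg (inv_nonneg.2 hΔ0) (hdr0 i)) (hdc0 j))
  have hrowρ : ∀ i, rowSum (roundPlan π r c) i = r i := by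
    intro i
    rw [hplan]
    simp only [rowSum]
    rw [Finset.sum_add_distrib, ← Finset.mul_sum, ← hΔc]
    rcases eq_or_ne Δ 0 with h | h
    · have hdri : dr i = 0 := by
        have := (Finset.sum_eq_zero_iff_of_nonneg (fun i _ => hdr0 i)).1 (hΔr ▸ h) i
          (Finset.mem_univ i)
        exact this
      have : rowSum π2 i = r i - dr i := by rw [hdrdef]; ring
      rw [show (∑ j, π2 i j) = rowSum π2 i from rfl, this, hdri, h]
      ring
    · rw [show (∑ j, π2 i j) = rowSum π2 i from rfl]
      field_simp
      rw [hdrdef]; ring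
  have hcolρ : ∀ j, colSum (roundPlan π r c) j = c j := by
    intro j
    rw [hplan]
    simp only [colSum]
    rw [Finset.sum_add_distrib]
    have h2 : ∑ i, Δ⁻¹ * dr i * dc j = Δ⁻¹ * (∑ i, dr i) * dc j := by
      rw [Finset.mul_sum, Finset.sum_mul]
    rw [h2, ← hΔr]
    rcases eq_or_ne Δ 0 with h | h
    · have hdcj : dc j = 0 := by
        exact (Finset.sum_eq_zero_iff_of_nonneg (fun j _ => hdc0 j)).1 (hΔc ▸ h) j
          (Finset.mem_univ j)
      have : colSum π2 j = c j - dc j := by rw [hdcdef]; ring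
      rw [show (∑ i, π2 i j) = colSum π2 j from rfl, this, hdcj, h]
      ring
    · rw [show (∑ i, π2 i j) = colSum π2 j from rfl]
      field_simp
      rw [hdcdef]; ring
  refine ⟨hρ0, hrowρ, hcolρ, ?_⟩
  -- the cost bound
  rw [hF, hF]
  have hzero : ∑ j, |colSum (roundPlan π r c) j - c j| = 0 := by
    apply Finset.sum_eq_zero; intro j _; rw [hcolρ j]; simp
  rw [hzero, mul_zero, add_zero]
  set T : ℝ := ∑ j, |colSum π j - c j| with hTdef
  have hT0 : 0 ≤ T := Finset.sum_nonneg fun j _ => abs_nonneg _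
  have hΔT : Δ ≤ T := by
    rw [hΔc, hTdef]
    apply Finset.sum_le_sum
    intro j _
    rw [hdcdef]
    simp only [hcol2]
    rcases le_total (c j) (colSum π j) with h | h
    · rw [min_eq_left h]; simp [abs_nonneg]
    · rw [min_eq_right h, abs_of_nonpos (by linarith)]; linarith
  -- main estimate
  have hsplit : ∑ i, ∑ j, roundPlan π r c i j * C i j
      = (∑ i, ∑ j, π2 i j * C i j) + Δ⁻¹ * ∑ i, ∑ j, dr i * dc j * C i j := by
    rw [hplan, Finset.mul_sum]
    rw [← Finset.sum_add_distrib]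
    apply Finset.sum_congr rfl; intro i _
    rw [Finset.mul_sum, ← Finset.sum_add_distrib]
    apply Finset.sum_congr rfl; intro j _
    ring
  rw [hsplit]
  have hA : (∑ i, ∑ j, π2 i j * C i j) ≤ ∑ i, ∑ j, π i j * C i j := by
    apply Finset.sum_le_sum; intro i _
    apply Finset.sum_le_sum; intro j _
    exact mul_le_mul_of_nonneg_right (hπ2le i j) (hC i j)
  have hB : (∑ i, ∑ j, dr i * dc j * C i j) ≤ Δ * Δ * Cinf := by
    calc (∑ i, ∑ j, dr i * dc j * C i j)
        ≤ ∑ i, ∑ j, dr i * dc j * Cinf := by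
          apply Finset.sum_le_sum; intro i _
          apply Finset.sum_le_sum; intro j _
          exact mul_le_mul_of_nonneg_left (hCle i j) (mul_nonneg (hdr0 i) (hdc0 j))
      _ = (∑ i, dr i) * (∑ j, dc j) * Cinf := by
          rw [Finset.sum_mul, Finset.sum_mul]
          apply Finset.sum_congr rfl; intro i _
          rw [Finset.mul_sum, Finset.sum_mul]
      _ = Δ * Δ * Cinf := by rw [← hΔr, ← hΔc]
  have hB' : Δ⁻¹ * (∑ i, ∑ j, dr i * dc j * C i j) ≤ Δ * Cinf := by
    rcases eq_or_ne Δ 0 with h | h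
    · have hzero2 : (∑ i, ∑ j, dr i * dc j * C i j) = 0 := by
        apply Finset.sum_eq_zero; intro i _
        apply Finset.sum_eq_zero; intro j _
        have : dr i = 0 := (Finset.sum_eq_zero_iff_of_nonneg (fun i _ => hdr0 i)).1
          (hΔr ▸ h) i (Finset.mem_univ i)
        rw [this]; ring
      rw [hzero2, mul_zero, h]; simp
    · have := mul_le_mul_of_nonneg_left hB (inv_nonneg.2 hΔ0)
      calc Δ⁻¹ * (∑ i, ∑ j, dr i * dc j * C i j) ≤ Δ⁻¹ * (Δ * Δ * Cinf) := this
        _ = Δ * Cinf := by field_simp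
  have hfinal : Δ * Cinf ≤ 2 * Cinf * T := by nlinarith
  linarith
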